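/- Let A be an n × n real matrix partitioned into an N × N block matrix with square diagonal blocks of sizes b_1, …, b_N, and let t = (t_1; …; t_N) be a vector of size n partitioned conformally. Suppose blocks C̄_{ij} are defined as in the block filtering decomposition: C̄_{ij} = A_{ij} if i = 1 or j = 1, and C̄_{ij} = A_{ij} − Σ_{k=1}^{min(i,j)−1} L̄_{ik} F̄_{kj} Ū_{kj} otherwise, with L̄_{ik} = C̄_{ik} for i > k, Ū_{kj} = C̄_{kj} for k < j, invertible diagonal blocks D̄_{kk} = C̄_{kk}, and each F̄_{kj} satisfying F̄_{kj} (Ū_{kj} t_j) = D̄_{kk}^{-1} (Ū_{kj} t_j). Let M = (L̄ + D̄) D̄^{-1} (Ū + D̄) and B = M − A. Then every block of B annihilates the corresponding part of the filtering vector: B_{ij} t_j = 0 for all 1 ≤ i, j ≤ N. -/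

import Mathlib

open Matrix

/-- The `(i,j)` block of a matrix partitioned into an `N × N` block structure with
diagonal blocks of sizes `b 0, …, b (N-1)`. -/
def blk {N : ℕ} {b : Fin N → ℕ}
    (A : Matrix ((k : Fin N) × Fin (b k)) ((k : Fin N) × Fin (b k)) ℝ)
    (i j : Fin N) : Matrix (Fin (b i)) (Fin (b j)) ℝ :=
  Matrix.of fun x y => A ⟨i, x⟩ ⟨j, y⟩

section helpers
variable {N : ℕ} {b : Fin N → ℕ}

lemma blk_mul (X Y : Matrix ((k : Fin N) × Fin (b k)) ((k : Fin N) × Fin (b k)) ℝ)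
    (i j : Fin N) : blk (X * Y) i j = ∑ k, blk X i k * blk Y k j := by
  ext x y
  simp only [blk, Matrix.mul_apply, Matrix.of_apply, Matrix.sum_apply]
  rw [← Finset.univ_sigma_univ, Finset.sum_sigma]

lemma blk_add (X Y : Matrix ((k : Fin N) × Fin (b k)) ((k : Fin N) × Fin (b k)) ℝ)
    (i j : Fin N) : blk (X + Y) i j = blk X i j + blk Y i j := rfl

lemma blk_sub (X Y : Matrix ((k : Fin N) × Fin (b k)) ((k : Fin N) × Fin (b k)) ℝ)
    (i j : Fin N) : blk (X - Y) i j = blk X i j - blk Y i j := rfl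

lemma blk_bd_same (d : ∀ k : Fin N, Matrix (Fin (b k)) (Fin (b k)) ℝ) (i : Fin N) :
    blk (blockDiagonal' d) i i = d i := by
  ext x y; simp [blk, blockDiagonal'_apply]

lemma blk_bd_ne (d : ∀ k : Fin N, Matrix (Fin (b k)) (Fin (b k)) ℝ) {i j : Fin N}
    (h : i ≠ j) : blk (blockDiagonal' d) i j = 0 := by
  ext x y; simp [blk, blockDiagonal'_apply_ne _ _ _ h]

lemma sum_mulVec' {m n : Type*} [Fintype n] {ι : Type*} (s : Finset ι)
    (f : ι → Matrix m n ℝ) (v : n → ℝ) :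
    (∑ k ∈ s, f k) *ᵥ v = ∑ k ∈ s, f k *ᵥ v := by
  ext x
  simp only [Matrix.mulVec, dotProduct, Matrix.sum_apply, Finset.sum_mul,
    Finset.sum_apply]
  rw [Finset.sum_comm]

end helpers

/-- For the block filtering preconditioner `M = (L̄ + D̄) D̄⁻¹ (Ū + D̄)`, every block of
`B = M - A` annihilates the corresponding part of the filtering vector:
`Bᵢⱼ tⱼ = 0` for all `i, j`. -/
theorem block_filtering_blockwise_annihilation {N : ℕ} {b : Fin N → ℕ}
    (A : Matrix ((k : Fin N) × Fin (b k)) ((k : Fin N) × Fin (b k)) ℝ)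
    (t : ((k : Fin N) × Fin (b k)) → ℝ)
    (C : ∀ i j : Fin N, Matrix (Fin (b i)) (Fin (b j)) ℝ)
    (F : ∀ k j : Fin N, Matrix (Fin (b k)) (Fin (b k)) ℝ)
    (hD : ∀ k : Fin N, IsUnit (C k k))
    (hC1 : ∀ i j : Fin N, i.1 = 0 ∨ j.1 = 0 → C i j = blk A i j)
    (hC2 : ∀ i j : Fin N, i.1 ≠ 0 → j.1 ≠ 0 →
      C i j = blk A i j -
        ∑ k ∈ Finset.univ.filter (fun k : Fin N => k < i ∧ k < j),
          C i k * F k j * C k j)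
    (hF : ∀ k j : Fin N, k < j →
      (F k j) *ᵥ ((C k j) *ᵥ fun y => t ⟨j, y⟩) =
        (C k k)⁻¹ *ᵥ ((C k j) *ᵥ fun y => t ⟨j, y⟩))
    (L U M : Matrix ((k : Fin N) × Fin (b k)) ((k : Fin N) × Fin (b k)) ℝ)
    (hL : ∀ i j : Fin N, j < i → blk L i j = C i j)
    (hL0 : ∀ i j : Fin N, ¬ j < i → blk L i j = 0)
    (hU : ∀ i j : Fin N, i < j → blk U i j = C i j)
    (hU0 : ∀ i j : Fin N, ¬ i < j → blk U i j = 0)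
    (hM : M = (L + blockDiagonal' (fun k => C k k)) *
        blockDiagonal' (fun k => (C k k)⁻¹) *
        (U + blockDiagonal' (fun k => C k k))) :
    ∀ i j : Fin N, (blk (M - A) i j) *ᵥ (fun y => t ⟨j, y⟩) = 0 := by
  intro i j
  set v : Fin (b j) → ℝ := fun y => t ⟨j, y⟩ with hv
  have hdet : ∀ k : Fin N, IsUnit (C k k).det :=
    fun k => ((C k k).isUnit_iff_isUnit_det).mp (hD k)
  set Dm : Matrix ((k : Fin N) × Fin (b k)) ((k : Fin N) × Fin (b k)) ℝ :=
    blockDiagonal' (fun k : Fin N => C k k) with hDm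
  set Di : Matrix ((k : Fin N) × Fin (b k)) ((k : Fin N) × Fin (b k)) ℝ :=
    blockDiagonal' (fun k : Fin N => (C k k)⁻¹) with hDi
  have h1 : Dm * Di = 1 := by
    rw [hDm, hDi, ← blockDiagonal'_mul]
    rw [show (fun k : Fin N => C k k * (C k k)⁻¹) = fun k : Fin N => (1 : Matrix _ _ ℝ) from
      funext fun k => Matrix.mul_nonsing_inv _ (hdet k)]
    exact blockDiagonal'_one
  have h2 : Di * Dm = 1 := by
    rw [hDm, hDi, ← blockDiagonal'_mul]
    rw [show (fun k : Fin N => (C k k)⁻¹ * C k k) = fun k : Fin N => (1 : Matrix _ _ ℝ) from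
      funext fun k => Matrix.nonsing_inv_mul _ (hdet k)]
    exact blockDiagonal'_one
  have hM' : M = L * Di * U + L + U + Dm := by
    rw [hM, add_mul L Dm Di, h1, add_mul, mul_add, mul_add, one_mul,
      Matrix.mul_assoc L Di Dm, h2, Matrix.mul_one, Matrix.one_mul]
    abel
  -- the (i,j) block of M
  have e2 : blk (L * Di * U) i j = ∑ k, blk L i k * ((C k k)⁻¹ * blk U k j) := by
    rw [Matrix.mul_assoc, blk_mul]
    refine Finset.sum_congr rfl fun k _ => ?_
    have : blk (Di * U) k j = (C k k)⁻¹ * blk U k j := by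
      rw [blk_mul]
      rw [Finset.sum_eq_single k (fun m _ hm => by rw [blk_bd_ne _ (Ne.symm hm), Matrix.zero_mul])
        (fun h => absurd (Finset.mem_univ k) h)]
      rw [hDi, blk_bd_same]
    rw [this]
  have htri : blk L i j + blk U i j + blk Dm i j = C i j := by
    rcases lt_trichotomy i j with h | h | h
    · rw [hL0 i j (asymm h), hU i j h, hDm, blk_bd_ne _ (ne_of_lt h)]
      simp
    · subst h
      rw [hL0 i i (lt_irrefl i), hU0 i i (lt_irrefl i), hDm, blk_bd_same]
      simp
    · rw [hL i j h, hU0 i j (asymm h), hDm, blk_bd_ne _ (ne_of_gt h)]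
      simp
  have hMblk : blk M i j = (∑ k, blk L i k * ((C k k)⁻¹ * blk U k j)) + C i j := by
    rw [hM', blk_add, blk_add, blk_add, e2, add_assoc, add_assoc, ← add_assoc (blk L i j), htri]
  have hsum : (∑ k : Fin N, blk L i k * ((C k k)⁻¹ * blk U k j)) *ᵥ v
      = ∑ k ∈ Finset.univ.filter (fun k : Fin N => k < i ∧ k < j),
          (C i k * F k j * C k j) *ᵥ v := by
    rw [sum_mulVec', Finset.sum_filter]
    refine Finset.sum_congr rfl fun k _ => ?_
    by_cases hk : k < i ∧ k < j
    · rw [if_pos hk, hL i k hk.1, hU k j hk.2]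
      rw [← Matrix.mulVec_mulVec, ← Matrix.mulVec_mulVec, ← hF k j hk.2,
        Matrix.mulVec_mulVec, Matrix.mulVec_mulVec, Matrix.mul_assoc]
    · rw [if_neg hk]
      rcases not_and_or.mp hk with h | h
      · rw [hL0 i k h, Matrix.zero_mul, Matrix.zero_mulVec]
      · rw [hU0 k j h, Matrix.mul_zero, Matrix.mul_zero, Matrix.zero_mulVec]
  rw [blk_sub, Matrix.sub_mulVec, hMblk, Matrix.add_mulVec, hsum]
  by_cases h0 : i.1 = 0 ∨ j.1 = 0
  · have hfilt : Finset.univ.filter (fun k : Fin N => k < i ∧ k < j) = ∅ := by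
      refine Finset.eq_empty_of_forall_notMem fun k hk => ?_
      rw [Finset.mem_filter] at hk
      rcases h0 with h0 | h0
      · exact absurd hk.2.1 (by simp [Fin.lt_def, h0])
      · exact absurd hk.2.2 (by simp [Fin.lt_def, h0])
    rw [hfilt, Finset.sum_empty, hC1 i j h0]
    simp
  · push_neg at h0
    rw [hC2 i j h0.1 h0.2, Matrix.sub_mulVec, sum_mulVec']
    abel
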